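/- arXiv:2006.00039 — 2 statements merged into one kernel-verified Lean document; each statement's English description precedes it below -/
import Mathlib

section
/- There exists a universal constant C > 0 such that for every function ψ in W^{1,1}(ℝ³), the product of the W^{1,1} norm of ψ with the cube root of the supremum over a ∈ ℝ³ of the integral of |ψ| over the unit ball B₁(a) is at least C times the integral of |ψ|^{4/3} over ℝ³. -/
open MeasureTheory Metric ENNReal

noncomputable section

namespace Stmt0Aux

abbrev E3 := EuclideanSpace ℝ (Fin 3)

lemma ofReal_norm_eq_coe_nnnorm {E : Type*} [SeminormedAddCommGroup E] (a : E) :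
    ENNReal.ofReal ‖a‖ = ↑‖a‖₊ := ofReal_norm a

theorem ofReal_integral_norm_eq_lintegral_nnnorm {α : Type*} [MeasurableSpace α] {μ : Measure α}
    {P : Type*} [NormedAddCommGroup P] {f : α → P} (hf : Integrable f μ) :
    ENNReal.ofReal (∫ x, ‖f x‖ ∂μ) = ∫⁻ x, ↑‖f x‖₊ ∂μ := ofReal_integral_norm_eq_lintegral_enorm hf

lemma coord_le_dist (x y : E3) (i : Fin 3) : |x i - y i| ≤ dist x y := by
  rw [EuclideanSpace.dist_eq]
  have h1 : |x i - y i| = Real.sqrt (dist (x i) (y i) ^ 2) := by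
    rw [Real.sqrt_sq_eq_abs, Real.dist_eq, abs_abs]
  rw [h1]
  apply Real.sqrt_le_sqrt
  exact Finset.single_le_sum (f := fun j => dist (x j) (y j) ^ 2)
    (fun j _ => sq_nonneg _) (Finset.mem_univ i)

def cvec (v : Fin 3 → ℤ) : E3 := (EuclideanSpace.equiv (Fin 3) ℝ).symm (fun i => (v i : ℝ) + 1/2)

lemma cvec_apply (v : Fin 3 → ℤ) (i : Fin 3) : cvec v i = (v i : ℝ) + 1/2 := rfl

def Qcube (v : Fin 3 → ℤ) : Set E3 := {x | ∀ i, (v i : ℝ) ≤ x i ∧ x i < (v i : ℝ) + 1}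

lemma measurable_coord (i : Fin 3) : Measurable (fun x : E3 => x i) :=
  (EuclideanSpace.proj (𝕜 := ℝ) (ι := Fin 3) i).continuous.measurable

lemma Qcube_measurable (v : Fin 3 → ℤ) : MeasurableSet (Qcube v) := by
  have : Qcube v = ⋂ i, ((fun x : E3 => x i) ⁻¹' Set.Ico (v i : ℝ) ((v i : ℝ) + 1)) := by
    ext x; simp [Qcube, Set.mem_iInter, Set.mem_Ico]
  rw [this]
  exact MeasurableSet.iInter fun i => (measurable_coord i) measurableSet_Ico

lemma Qcube_union : (⋃ v : Fin 3 → ℤ, Qcube v) = Set.univ := by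
  ext x
  simp only [Set.mem_iUnion, Set.mem_univ, iff_true]
  exact ⟨fun i => ⌊x i⌋, fun i => ⟨Int.floor_le _, Int.lt_floor_add_one _⟩⟩

lemma Qcube_disjoint : Pairwise (Function.onFun Disjoint Qcube) := by
  intro v w hvw
  rw [Function.onFun, Set.disjoint_left]
  rintro x hxv hxw
  apply hvw
  funext i
  have h1 := hxv i; have h2 := hxw i
  have : v i = ⌊x i⌋ := by
    rw [eq_comm, Int.floor_eq_iff]; exact ⟨h1.1, h1.2⟩
  have h4 : w i = ⌊x i⌋ := by
    rw [eq_comm, Int.floor_eq_iff]; exact ⟨h2.1, h2.2⟩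
  rw [this, h4]

lemma Qcube_subset (v : Fin 3 → ℤ) : Qcube v ⊆ closedBall (cvec v) 0.9 := by
  intro x hx
  rw [mem_closedBall, EuclideanSpace.dist_eq]
  have : ∀ i, dist (x i) (cvec v i) ^ 2 ≤ 1/4 := by
    intro i
    have h := hx i
    rw [Real.dist_eq, cvec_apply]
    have : |x i - ((v i : ℝ) + 1/2)| ≤ 1/2 := by
      rw [abs_le]; constructor <;> [linarith [h.1]; linarith [h.2]]
    nlinarith [abs_nonneg (x i - ((v i : ℝ) + 1/2))]
  have hsum : ∑ i, dist (x i) (cvec v i) ^ 2 ≤ 3/4 := by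
    calc ∑ i, dist (x i) (cvec v i) ^ 2 ≤ ∑ _i : Fin 3, (1/4 : ℝ) :=
          Finset.sum_le_sum fun i _ => this i
      _ = 3/4 := by simp; norm_num
  calc Real.sqrt (∑ i, dist (x i) (cvec v i) ^ 2) ≤ Real.sqrt (3/4) := Real.sqrt_le_sqrt hsum
    _ ≤ 0.9 := by
        rw [show (0.9 : ℝ) = Real.sqrt (0.81) from (Real.sqrt_eq_iff_mul_self_eq (by norm_num) (by norm_num)).mpr (by norm_num) |>.symm]
        apply Real.sqrt_le_sqrt; norm_num

def bump : ContDiffBump (0 : E3) := ⟨0.9, 1, by norm_num, by norm_num⟩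


-- derivative bound
lemma bump_deriv_bdd : ∃ L : ℝ, 0 ≤ L ∧ ∀ y : E3, ‖fderiv ℝ (⇑bump) y‖ ≤ L := by
  have hc : Continuous fun y : E3 => ‖fderiv ℝ (⇑bump) y‖ :=
    ((bump.contDiff (n := 1)).continuous_fderiv (by simp)).norm
  have hcs : HasCompactSupport fun y : E3 => ‖fderiv ℝ (⇑bump) y‖ :=
    (bump.hasCompactSupport.fderiv ℝ).norm
  obtain ⟨L, hL⟩ := (hc.bddAbove_range_of_hasCompactSupport hcs)
  refine ⟨L, le_trans (norm_nonneg _) (hL ⟨0, rfl⟩), fun y => hL ⟨y, rfl⟩⟩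

-- translated bump
def chi (c : E3) : E3 → ℝ := fun x => bump (x - c)

lemma chi_fderiv (c : E3) (x : E3) : fderiv ℝ (chi c) x = fderiv ℝ (⇑bump) (x - c) := by
  have h1 : chi c = (⇑bump) ∘ (fun x : E3 => x - c) := rfl
  rw [h1, fderiv_comp x ((bump.contDiff (n := 1)).differentiable (by simp) _)
    (differentiableAt_fun_id.sub_const c)]
  have : fderiv ℝ (fun x : E3 => x - c) x = ContinuousLinearMap.id ℝ E3 := by
    rw [fderiv_sub_const]; exact fderiv_id'
  rw [this, ContinuousLinearMap.comp_id]


lemma overlap_count (x : E3) :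
    ∑' v : Fin 3 → ℤ, (Set.indicator (closedBall (cvec v) 1) (fun _ => (1:ENNReal)) x) ≤ 27 := by
  set low : Fin 3 → ℤ := fun i => ⌈x i - 3/2⌉ with hlow
  set s : Finset (Fin 3 → ℤ) := Finset.Icc low (fun i => low i + 2) with hs
  have key : ∀ v : Fin 3 → ℤ, x ∈ closedBall (cvec v) 1 → v ∈ s := by
    intro v hv
    rw [hs, Finset.mem_Icc]
    rw [mem_closedBall] at hv
    constructor <;> (rw [Pi.le_def]; intro i) <;>
    · have h := le_trans (coord_le_dist x (cvec v) i) hv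
      rw [cvec_apply, abs_le] at h
      simp only [hlow, Pi.add_apply]
      first
        | exact Int.ceil_le.mpr (by linarith [h.2])
        | exact_mod_cast le_trans (le_of_eq rfl) (show (v i : ℝ) ≤ (⌈x i - 3/2⌉ : ℝ) + 2 by
            have := Int.le_ceil (x i - 3/2); linarith [h.1])
  have hzero : ∀ v ∉ s, Set.indicator (closedBall (cvec v) 1) (fun _ => (1:ENNReal)) x = 0 := by
    intro v hv
    apply Set.indicator_of_notMem
    exact fun hx => hv (key v hx)
  rw [tsum_eq_sum hzero]
  calc ∑ v ∈ s, Set.indicator (closedBall (cvec v) 1) (fun _ => (1:ENNReal)) x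
      ≤ ∑ _v ∈ s, 1 := Finset.sum_le_sum fun v _ => Set.indicator_le_self' (by simp) x
    _ = s.card := by simp
    _ = 27 := by
        rw [hs, Pi.card_Icc]
        norm_num [Int.card_Icc]
        have h3 : ∀ i : Fin 3, (low i + 2 + 1 - low i).toNat = 3 := fun i => by omega
        simp [h3]; norm_num

def K1 : ℝ≥0∞ := (lintegralPowLePowLIntegralFDerivConst (volume : Measure E3) (3/2) : ℝ≥0∞) ^ ((2:ℝ)/3)

lemma rpow_split (t : ℝ≥0∞) : t ^ ((4:ℝ)/3) = t * t ^ ((1:ℝ)/3) := by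
  nth_rewrite 2 [← ENNReal.rpow_one t]
  rw [← ENNReal.rpow_add_of_nonneg 1 ((1:ℝ)/3) (by norm_num) (by norm_num)]
  norm_num

lemma rpow_third_cube (t : ℝ≥0∞) : (t ^ ((1:ℝ)/3)) ^ (3:ℝ) = t := by
  rw [← ENNReal.rpow_mul]; norm_num

def gfun (ψ : E3 → ℝ) (L : ℝ) (x : E3) : ℝ≥0∞ := ENNReal.ofReal (L * |ψ x| + ‖fderiv ℝ ψ x‖)

def Sen (ψ : E3 → ℝ) : ℝ≥0∞ := ⨆ a : E3, ∫⁻ x in ball a 1, ↑‖ψ x‖₊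

theorem percube (ψ : E3 → ℝ) (hψ : ContDiff ℝ 1 ψ) (L : ℝ)
    (hL : ∀ y : E3, ‖fderiv ℝ (⇑bump) y‖ ≤ L) (v : Fin 3 → ℤ) :
    ∫⁻ x in Qcube v, (↑‖ψ x‖₊ : ℝ≥0∞) ^ ((4:ℝ)/3) ≤
      K1 * (∫⁻ x, (closedBall (cvec v) 1).indicator (gfun ψ L) x) * (Sen ψ) ^ ((1:ℝ)/3) := by
  set c := cvec v with hc
  set u : E3 → ℝ := fun x => ψ x * chi c x with hu_def
  have hχsupp : Function.support (chi c) = ball c 1 := by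
    have h' : Function.support (chi c) = (fun x => x - c) ⁻¹' Function.support (⇑bump) := by
      ext x; simp [chi, Function.mem_support]
    rw [h', bump.support_eq]
    ext x
    simp only [Set.mem_preimage, mem_ball, dist_eq_norm, sub_zero]
    rw [show bump.rOut = 1 from rfl]
  have hχ01 : ∀ x, 0 ≤ chi c x ∧ chi c x ≤ 1 := fun x => ⟨bump.nonneg, bump.le_one⟩
  have hχct : ContDiff ℝ 1 (chi c) :=
    (bump.contDiff (n := 1)).comp (contDiff_id.sub contDiff_const)
  have hu : ContDiff ℝ 1 u := hψ.mul hχct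
  have husupp : ∀ x ∉ closedBall c 1, u x = 0 := by
    intro x hx
    have : chi c x = 0 := by
      by_contra h
      exact hx (ball_subset_closedBall (hχsupp ▸ Function.mem_support.mpr h))
    simp [hu_def, this]
  have h2u : HasCompactSupport u :=
    HasCompactSupport.intro (isCompact_closedBall c 1) husupp
  have hfd : ∀ x, (↑‖fderiv ℝ u x‖₊ : ℝ≥0∞) ≤ (closedBall c 1).indicator (gfun ψ L) x := by
    intro x
    by_cases hx : x ∈ closedBall c 1
    · rw [Set.indicator_of_mem hx]
      have hfu : fderiv ℝ u x = ψ x • fderiv ℝ (chi c) x + chi c x • fderiv ℝ ψ x :=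
        fderiv_mul (hψ.differentiable one_ne_zero x) (hχct.differentiable one_ne_zero x)
      have h1 : ‖ψ x • fderiv ℝ (chi c) x‖ ≤ L * |ψ x| := by
        rw [norm_smul, Real.norm_eq_abs, mul_comm]
        exact mul_le_mul_of_nonneg_right (chi_fderiv c x ▸ hL (x - c)) (abs_nonneg _)
      have h2 : ‖chi c x • fderiv ℝ ψ x‖ ≤ ‖fderiv ℝ ψ x‖ := by
        rw [norm_smul, Real.norm_eq_abs, abs_of_nonneg (hχ01 x).1]
        calc chi c x * ‖fderiv ℝ ψ x‖ ≤ 1 * ‖fderiv ℝ ψ x‖ :=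
              mul_le_mul_of_nonneg_right (hχ01 x).2 (norm_nonneg _)
          _ = _ := one_mul _
      have hnorm : ‖fderiv ℝ u x‖ ≤ L * |ψ x| + ‖fderiv ℝ ψ x‖ := by
        rw [hfu]
        calc ‖ψ x • fderiv ℝ (chi c) x + chi c x • fderiv ℝ ψ x‖
            ≤ ‖ψ x • fderiv ℝ (chi c) x‖ + ‖chi c x • fderiv ℝ ψ x‖ := norm_add_le _ _
          _ ≤ L * |ψ x| + ‖fderiv ℝ ψ x‖ := add_le_add h1 h2
      calc (↑‖fderiv ℝ u x‖₊ : ℝ≥0∞) = ENNReal.ofReal ‖fderiv ℝ u x‖ :=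
            (ofReal_norm_eq_coe_nnnorm _).symm
        _ ≤ gfun ψ L x := ENNReal.ofReal_le_ofReal hnorm
    · rw [Set.indicator_of_notMem hx]
      have hz : fderiv ℝ u x = 0 := by
        have hopen : IsOpen (closedBall c 1)ᶜ := isOpen_compl_iff.mpr Metric.isClosed_closedBall
        have hev : u =ᶠ[nhds x] (fun _ => 0) :=
          Filter.eventually_of_mem (hopen.mem_nhds hx) (fun y hy => husupp y hy)
        rw [hev.fderiv_eq, fderiv_fun_const]; rfl
      simp [hz]
  have hmeas_u : AEMeasurable (fun x => (↑‖u x‖₊ : ℝ≥0∞)) volume :=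
    (hu.continuous.measurable.nnnorm.coe_nnreal_ennreal).aemeasurable
  have step1 : ∫⁻ x in Qcube v, (↑‖ψ x‖₊ : ℝ≥0∞) ^ ((4:ℝ)/3)
      = ∫⁻ x in Qcube v, (↑‖u x‖₊ : ℝ≥0∞) ^ ((4:ℝ)/3) := by
    apply setLIntegral_congr_fun (Qcube_measurable v)
    intro x hx
    have hb : x - c ∈ closedBall (0:E3) bump.rIn := by
      have h9 := Qcube_subset v hx
      rw [mem_closedBall] at h9 ⊢
      rw [dist_eq_norm, sub_zero, ← dist_eq_norm]
      exact le_trans h9 (by rw [show bump.rIn = 0.9 from rfl])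
    have h1 : chi c x = 1 := bump.one_of_mem_closedBall hb
    simp [hu_def, h1]
  have step2 : ∫⁻ x in Qcube v, (↑‖u x‖₊ : ℝ≥0∞) ^ ((4:ℝ)/3)
      ≤ ∫⁻ x, (↑‖u x‖₊ : ℝ≥0∞) ^ ((4:ℝ)/3) := setLIntegral_le_lintegral _ _
  have step3 : ∫⁻ x, (↑‖u x‖₊ : ℝ≥0∞) ^ ((4:ℝ)/3)
      ≤ (∫⁻ x, (↑‖u x‖₊ : ℝ≥0∞) ^ ((3:ℝ)/2)) ^ ((2:ℝ)/3) * (∫⁻ x, (↑‖u x‖₊ : ℝ≥0∞)) ^ ((1:ℝ)/3) := by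
    have hpq : Real.HolderConjugate (3/2) 3 := Real.holderConjugate_iff.mpr ⟨by norm_num, by norm_num⟩
    have hH := ENNReal.lintegral_mul_le_Lp_mul_Lq (volume : Measure E3) hpq
      hmeas_u (hmeas_u.pow_const ((1:ℝ)/3))
    simp only [Pi.mul_apply] at hH
    calc ∫⁻ x, (↑‖u x‖₊ : ℝ≥0∞) ^ ((4:ℝ)/3)
        = ∫⁻ x, (↑‖u x‖₊ : ℝ≥0∞) * (↑‖u x‖₊ : ℝ≥0∞) ^ ((1:ℝ)/3) := by
          simp_rw [rpow_split]
      _ ≤ (∫⁻ x, (↑‖u x‖₊ : ℝ≥0∞) ^ ((3:ℝ)/2)) ^ ((1:ℝ)/(3/2)) *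
          (∫⁻ x, ((↑‖u x‖₊ : ℝ≥0∞) ^ ((1:ℝ)/3)) ^ (3:ℝ)) ^ ((1:ℝ)/3) := hH
      _ = (∫⁻ x, (↑‖u x‖₊ : ℝ≥0∞) ^ ((3:ℝ)/2)) ^ ((2:ℝ)/3) * (∫⁻ x, (↑‖u x‖₊ : ℝ≥0∞)) ^ ((1:ℝ)/3) := by
          simp_rw [rpow_third_cube]
          norm_num
  have step4 : (∫⁻ x, (↑‖u x‖₊ : ℝ≥0∞) ^ ((3:ℝ)/2)) ^ ((2:ℝ)/3) ≤ K1 * ∫⁻ x, ↑‖fderiv ℝ u x‖₊ := by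
    have hp : Real.HolderConjugate (Module.finrank ℝ E3 : ℝ) (3/2) := by
      rw [show (Module.finrank ℝ E3 : ℝ) = 3 by simp [finrank_euclideanSpace]]
      exact Real.holderConjugate_iff.mpr ⟨by norm_num, by norm_num⟩
    have hGNS := lintegral_pow_le_pow_lintegral_fderiv (volume : Measure E3) hu h2u hp
    calc (∫⁻ x, (↑‖u x‖₊ : ℝ≥0∞) ^ ((3:ℝ)/2)) ^ ((2:ℝ)/3)
        ≤ ((lintegralPowLePowLIntegralFDerivConst (volume : Measure E3) (3/2) : ℝ≥0∞) *
            (∫⁻ x, ↑‖fderiv ℝ u x‖₊) ^ ((3:ℝ)/2)) ^ ((2:ℝ)/3) :=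
          ENNReal.rpow_le_rpow (by exact_mod_cast hGNS) (by norm_num)
      _ = K1 * ∫⁻ x, ↑‖fderiv ℝ u x‖₊ := by
          rw [ENNReal.mul_rpow_of_nonneg _ _ (by norm_num : (0:ℝ) ≤ 2/3), ← ENNReal.rpow_mul]
          norm_num [K1]
  have step5 : ∫⁻ x, (↑‖fderiv ℝ u x‖₊ : ℝ≥0∞) ≤ ∫⁻ x, (closedBall c 1).indicator (gfun ψ L) x :=
    lintegral_mono hfd
  have step6 : (∫⁻ x, (↑‖u x‖₊ : ℝ≥0∞)) ^ ((1:ℝ)/3) ≤ (Sen ψ) ^ ((1:ℝ)/3) := by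
    apply ENNReal.rpow_le_rpow _ (by norm_num)
    have hptwise : ∀ x, (↑‖u x‖₊ : ℝ≥0∞) ≤ (ball c 1).indicator (fun y => (↑‖ψ y‖₊ : ℝ≥0∞)) x := by
      intro x
      by_cases hx : x ∈ ball c 1
      · rw [Set.indicator_of_mem hx]
        simp only [hu_def]
        rw [← ofReal_norm_eq_coe_nnnorm, ← ofReal_norm_eq_coe_nnnorm]
        apply ENNReal.ofReal_le_ofReal
        rw [Real.norm_eq_abs, Real.norm_eq_abs, abs_mul]
        calc |ψ x| * |chi c x| ≤ |ψ x| * 1 := by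
              gcongr
              rw [abs_of_nonneg (hχ01 x).1]; exact (hχ01 x).2
          _ = |ψ x| := mul_one _
      · have hz : chi c x = 0 := by
          by_contra h
          exact hx (hχsupp ▸ Function.mem_support.mpr h)
        rw [Set.indicator_of_notMem hx]
        simp [hu_def, hz]
    calc ∫⁻ x, (↑‖u x‖₊ : ℝ≥0∞) ≤ ∫⁻ x, (ball c 1).indicator (fun y => (↑‖ψ y‖₊ : ℝ≥0∞)) x :=
          lintegral_mono hptwise
      _ = ∫⁻ x in ball c 1, ↑‖ψ x‖₊ :=
          lintegral_indicator measurableSet_ball _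
      _ ≤ Sen ψ := le_iSup (fun a => ∫⁻ x in ball a 1, (↑‖ψ x‖₊ : ℝ≥0∞)) c
  calc ∫⁻ x in Qcube v, (↑‖ψ x‖₊ : ℝ≥0∞) ^ ((4:ℝ)/3)
      ≤ (∫⁻ x, (↑‖u x‖₊ : ℝ≥0∞) ^ ((3:ℝ)/2)) ^ ((2:ℝ)/3) * (∫⁻ x, (↑‖u x‖₊ : ℝ≥0∞)) ^ ((1:ℝ)/3) :=
        (step1 ▸ step2).trans step3
    _ ≤ (K1 * ∫⁻ x, ↑‖fderiv ℝ u x‖₊) * (Sen ψ) ^ ((1:ℝ)/3) := by gcongr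
    _ ≤ (K1 * ∫⁻ x, (closedBall c 1).indicator (gfun ψ L) x) * (Sen ψ) ^ ((1:ℝ)/3) := by gcongr

theorem mainENN (ψ : E3 → ℝ) (hψ : ContDiff ℝ 1 ψ) (L : ℝ)
    (hL : ∀ y : E3, ‖fderiv ℝ (⇑bump) y‖ ≤ L) :
    ∫⁻ x, (↑‖ψ x‖₊ : ℝ≥0∞) ^ ((4:ℝ)/3) ≤
      27 * K1 * (∫⁻ x, gfun ψ L x) * (Sen ψ) ^ ((1:ℝ)/3) := by
  have hgmeas : Measurable (gfun ψ L) := by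
    apply Measurable.ennreal_ofReal
    exact (((continuous_const.mul hψ.continuous.abs)).add (hψ.continuous_fderiv one_ne_zero).norm).measurable
  have hsplit : ∫⁻ x, (↑‖ψ x‖₊ : ℝ≥0∞) ^ ((4:ℝ)/3)
      = ∑' v : Fin 3 → ℤ, ∫⁻ x in Qcube v, (↑‖ψ x‖₊ : ℝ≥0∞) ^ ((4:ℝ)/3) := by
    rw [← lintegral_iUnion Qcube_measurable Qcube_disjoint, Qcube_union]
    simp [Measure.restrict_univ]
  rw [hsplit]
  have hsum : ∑' v : Fin 3 → ℤ, ∫⁻ x, (closedBall (cvec v) 1).indicator (gfun ψ L) x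
      ≤ 27 * ∫⁻ x, gfun ψ L x := by
    rw [← lintegral_tsum (fun v => ((hgmeas.indicator (measurableSet_closedBall)).aemeasurable))]
    calc ∫⁻ x, ∑' v : Fin 3 → ℤ, (closedBall (cvec v) 1).indicator (gfun ψ L) x
        ≤ ∫⁻ x, 27 * gfun ψ L x := by
          apply lintegral_mono
          intro x
          have heq : ∀ v : Fin 3 → ℤ, (closedBall (cvec v) 1).indicator (gfun ψ L) x
              = gfun ψ L x * (closedBall (cvec v) 1).indicator (fun _ => (1:ℝ≥0∞)) x := by
            intro v
            by_cases hx : x ∈ closedBall (cvec v) 1 <;>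
              simp [Set.indicator_of_mem, Set.indicator_of_notMem, hx]
          simp_rw [heq]
          rw [ENNReal.tsum_mul_left]
          rw [mul_comm (27:ℝ≥0∞) _]
          exact mul_le_mul_right (overlap_count x) _
      _ = 27 * ∫⁻ x, gfun ψ L x := by rw [lintegral_const_mul _ hgmeas]
  calc ∑' v : Fin 3 → ℤ, ∫⁻ x in Qcube v, (↑‖ψ x‖₊ : ℝ≥0∞) ^ ((4:ℝ)/3)
      ≤ ∑' v : Fin 3 → ℤ, K1 * (∫⁻ x, (closedBall (cvec v) 1).indicator (gfun ψ L) x) *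
          (Sen ψ) ^ ((1:ℝ)/3) :=
        ENNReal.tsum_le_tsum (fun v => percube ψ hψ L hL v)
    _ = K1 * (Sen ψ) ^ ((1:ℝ)/3) *
          ∑' v : Fin 3 → ℤ, ∫⁻ x, (closedBall (cvec v) 1).indicator (gfun ψ L) x := by
        rw [← ENNReal.tsum_mul_left]
        congr 1; funext v; ring
    _ ≤ K1 * (Sen ψ) ^ ((1:ℝ)/3) * (27 * ∫⁻ x, gfun ψ L x) := mul_le_mul_right hsum _
    _ = 27 * K1 * (∫⁻ x, gfun ψ L x) * (Sen ψ) ^ ((1:ℝ)/3) := by ring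

end Stmt0Aux

open Stmt0Aux in
/-- There exists a universal constant `C > 0` such that for every
`ψ ∈ W^{1,1}(ℝ³)` (modeled as a `C¹` function with `ψ` and `‖∇ψ‖` integrable),
`‖ψ‖_{W^{1,1}} · (sup_a ∫_{B₁(a)} |ψ|)^{1/3} ≥ C ∫ |ψ|^{4/3}`. -/
theorem stmt0 :
    ∃ C : ℝ, 0 < C ∧
      ∀ ψ : EuclideanSpace ℝ (Fin 3) → ℝ,
        ContDiff ℝ 1 ψ →
        Integrable ψ →
        Integrable (fun x => ‖fderiv ℝ ψ x‖) →
        C * ∫ x, |ψ x| ^ ((4 : ℝ) / 3) ≤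
          ((∫ x, |ψ x|) + ∫ x, ‖fderiv ℝ ψ x‖) *
            (⨆ a : EuclideanSpace ℝ (Fin 3), ∫ x in ball a 1, |ψ x|) ^ ((1 : ℝ) / 3) := by
  obtain ⟨L, hL0, hL⟩ := bump_deriv_bdd
  set M : ℝ≥0∞ := 27 * K1 * (ENNReal.ofReal L + 1) with hM
  have hK1top : K1 ≠ ⊤ := ENNReal.rpow_ne_top_of_nonneg (by norm_num) coe_ne_top
  have hMtop : M ≠ ⊤ := by
    rw [hM]
    exact ENNReal.mul_ne_top (ENNReal.mul_ne_top (by norm_num) hK1top)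
      (ENNReal.add_ne_top.mpr ⟨ofReal_ne_top, one_ne_top⟩)
  refine ⟨(M.toReal + 1)⁻¹, by positivity, ?_⟩
  intro ψ hψ hint hint2
  -- real quantities
  set Sr : ℝ := ⨆ a : E3, ∫ x in ball a 1, |ψ x| with hSr
  have habs : Integrable (fun x : E3 => |ψ x|) := hint.abs
  have hbdd : BddAbove (Set.range fun a : E3 => ∫ x in ball a 1, |ψ x|) := by
    refine ⟨∫ x, |ψ x|, ?_⟩
    rintro r ⟨a, rfl⟩
    exact setIntegral_le_integral habs (Filter.Eventually.of_forall fun x => abs_nonneg _)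
  have hSr0 : 0 ≤ Sr := by
    refine le_trans ?_ (le_ciSup hbdd (0 : E3))
    exact setIntegral_nonneg measurableSet_ball fun x _ => abs_nonneg _
  -- lintegral identities
  have hIψ : ∫⁻ x, (↑‖ψ x‖₊ : ℝ≥0∞) = ENNReal.ofReal (∫ x, |ψ x|) := by
    rw [← ofReal_integral_norm_eq_lintegral_nnnorm hint]
    simp_rw [Real.norm_eq_abs]
  have hID : ∫⁻ x, (↑‖fderiv ℝ ψ x‖₊ : ℝ≥0∞) = ENNReal.ofReal (∫ x, ‖fderiv ℝ ψ x‖) := by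
    have h := ofReal_integral_norm_eq_lintegral_nnnorm hint2
    simp only [norm_norm, nnnorm_norm] at h
    exact h.symm
  have hSen : Sen ψ ≤ ENNReal.ofReal Sr := by
    apply iSup_le
    intro a
    have hball : ∫⁻ x in ball a 1, (↑‖ψ x‖₊ : ℝ≥0∞)
        = ENNReal.ofReal (∫ x in ball a 1, |ψ x|) := by
      rw [← ofReal_integral_norm_eq_lintegral_nnnorm (hint.restrict (s := ball a 1))]
      simp_rw [Real.norm_eq_abs]
    rw [hball]
    exact ENNReal.ofReal_le_ofReal (le_ciSup hbdd a)
  -- bound the gfun integral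
  have hgle : ∫⁻ x, gfun ψ L x ≤ (ENNReal.ofReal L + 1) *
      (ENNReal.ofReal (∫ x, |ψ x|) + ENNReal.ofReal (∫ x, ‖fderiv ℝ ψ x‖)) := by
    have hpt : ∀ x, gfun ψ L x = ENNReal.ofReal L * (↑‖ψ x‖₊ : ℝ≥0∞) + (↑‖fderiv ℝ ψ x‖₊ : ℝ≥0∞) := by
      intro x
      rw [gfun, ENNReal.ofReal_add (by positivity) (norm_nonneg _), ENNReal.ofReal_mul hL0]
      simp only [← ofReal_norm_eq_coe_nnnorm, Real.norm_eq_abs]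
    calc ∫⁻ x, gfun ψ L x
        = ENNReal.ofReal L * (∫⁻ x, (↑‖ψ x‖₊ : ℝ≥0∞)) + ∫⁻ x, (↑‖fderiv ℝ ψ x‖₊ : ℝ≥0∞) := by
          simp_rw [hpt]
          rw [lintegral_add_left (hψ.continuous.measurable.nnnorm.coe_nnreal_ennreal.const_mul _),
            lintegral_const_mul _ hψ.continuous.measurable.nnnorm.coe_nnreal_ennreal]
      _ ≤ (ENNReal.ofReal L + 1) * (ENNReal.ofReal (∫ x, |ψ x|) + ENNReal.ofReal (∫ x, ‖fderiv ℝ ψ x‖)) := by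
          rw [hIψ, hID]
          calc ENNReal.ofReal L * ENNReal.ofReal (∫ x, |ψ x|) + ENNReal.ofReal (∫ x, ‖fderiv ℝ ψ x‖)
              ≤ (ENNReal.ofReal L + 1) * ENNReal.ofReal (∫ x, |ψ x|) +
                (ENNReal.ofReal L + 1) * ENNReal.ofReal (∫ x, ‖fderiv ℝ ψ x‖) := by
                gcongr
                · exact le_add_of_nonneg_right zero_le_one
                · exact le_mul_of_one_le_left zero_le (le_add_of_nonneg_left zero_le)
            _ = _ := by ring
  -- main ENNReal bound
  have hmain := mainENN ψ hψ L hL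
  set A : ℝ≥0∞ := ∫⁻ x, (↑‖ψ x‖₊ : ℝ≥0∞) ^ ((4:ℝ)/3) with hA
  have hbound : A ≤ M * (ENNReal.ofReal (∫ x, |ψ x|) + ENNReal.ofReal (∫ x, ‖fderiv ℝ ψ x‖)) *
      (ENNReal.ofReal Sr) ^ ((1:ℝ)/3) := by
    calc A ≤ 27 * K1 * (∫⁻ x, gfun ψ L x) * (Sen ψ) ^ ((1:ℝ)/3) := hmain
      _ ≤ 27 * K1 * ((ENNReal.ofReal L + 1) *
            (ENNReal.ofReal (∫ x, |ψ x|) + ENNReal.ofReal (∫ x, ‖fderiv ℝ ψ x‖))) *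
          (ENNReal.ofReal Sr) ^ ((1:ℝ)/3) := by
          exact mul_le_mul' (mul_le_mul' le_rfl hgle) (ENNReal.rpow_le_rpow hSen (by norm_num))
      _ = M * (ENNReal.ofReal (∫ x, |ψ x|) + ENNReal.ofReal (∫ x, ‖fderiv ℝ ψ x‖)) *
          (ENNReal.ofReal Sr) ^ ((1:ℝ)/3) := by rw [hM]; ring
  -- convert to real
  have hRHStop : M * (ENNReal.ofReal (∫ x, |ψ x|) + ENNReal.ofReal (∫ x, ‖fderiv ℝ ψ x‖)) *
      (ENNReal.ofReal Sr) ^ ((1:ℝ)/3) ≠ ⊤ :=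
    ENNReal.mul_ne_top
      (ENNReal.mul_ne_top hMtop (ENNReal.add_ne_top.mpr ⟨ofReal_ne_top, ofReal_ne_top⟩))
      (ENNReal.rpow_ne_top_of_nonneg (by norm_num) ofReal_ne_top)
  have hint43 : ∫ x, |ψ x| ^ ((4:ℝ)/3) = A.toReal := by
    rw [hA, integral_eq_lintegral_of_nonneg_ae
      (Filter.Eventually.of_forall fun x => by positivity)
      ((hψ.continuous.abs.rpow_const (fun x => Or.inr (by norm_num))).aestronglyMeasurable)]
    congr 1
    apply lintegral_congr
    intro x
    rw [← ENNReal.ofReal_rpow_of_nonneg (abs_nonneg _) (by norm_num)]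
    congr 1
    rw [← ofReal_norm_eq_coe_nnnorm, Real.norm_eq_abs]
  have hInt1 : 0 ≤ ∫ x, |ψ x| := integral_nonneg fun x => abs_nonneg _
  have hInt2 : 0 ≤ ∫ x, ‖fderiv ℝ ψ x‖ := integral_nonneg fun x => norm_nonneg _
  have htoReal : A.toReal ≤ M.toReal * ((∫ x, |ψ x|) + ∫ x, ‖fderiv ℝ ψ x‖) * Sr ^ ((1:ℝ)/3) := by
    have h1 := ENNReal.toReal_mono hRHStop hbound
    calc A.toReal ≤ (M * (ENNReal.ofReal (∫ x, |ψ x|) + ENNReal.ofReal (∫ x, ‖fderiv ℝ ψ x‖)) *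
          (ENNReal.ofReal Sr) ^ ((1:ℝ)/3)).toReal := h1
      _ = M.toReal * ((∫ x, |ψ x|) + ∫ x, ‖fderiv ℝ ψ x‖) * Sr ^ ((1:ℝ)/3) := by
          rw [ENNReal.toReal_mul, ENNReal.toReal_mul, ENNReal.toReal_add ofReal_ne_top ofReal_ne_top,
            ENNReal.toReal_ofReal hInt1, ENNReal.toReal_ofReal hInt2, ← ENNReal.toReal_rpow,
            ENNReal.toReal_ofReal hSr0]
  -- finish
  rw [hint43]
  have hRHS0 : 0 ≤ ((∫ x, |ψ x|) + ∫ x, ‖fderiv ℝ ψ x‖) * Sr ^ ((1:ℝ)/3) := by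
    apply mul_nonneg (by linarith)
    exact Real.rpow_nonneg hSr0 _
  have hMt0 : 0 ≤ M.toReal := ENNReal.toReal_nonneg
  calc (M.toReal + 1)⁻¹ * A.toReal
      ≤ (M.toReal + 1)⁻¹ * (M.toReal * (((∫ x, |ψ x|) + ∫ x, ‖fderiv ℝ ψ x‖) * Sr ^ ((1:ℝ)/3))) := by
        apply mul_le_mul_of_nonneg_left _ (by positivity)
        rw [← mul_assoc]; exact htoReal
    _ ≤ 1 * (((∫ x, |ψ x|) + ∫ x, ‖fderiv ℝ ψ x‖) * Sr ^ ((1:ℝ)/3)) := by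
        rw [← mul_assoc]
        apply mul_le_mul_of_nonneg_right _ hRHS0
        rw [inv_mul_le_iff₀ (by positivity)]
        linarith
    _ = ((∫ x, |ψ x|) + ∫ x, ‖fderiv ℝ ψ x‖) * Sr ^ ((1:ℝ)/3) := one_mul _

end
end

section
/- Suppose V : ℝ³ → ℝ can be written as V = V₁ + V₂ with V₁ ∈ L^{5/2}(ℝ³), V₂ ∈ L^∞(ℝ³), and V(x) → 0 as |x| → ∞. Let (uₙ) and (vₙ) be sequences bounded in L²(ℝ³) ∩ L^{10/3}(ℝ³) such that uₙ − vₙ → 0 in L²_loc(ℝ³). Then ∫_{ℝ³} V(|uₙ|² − |vₙ|²) dx → 0 as n → ∞. -/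
open MeasureTheory Filter Set ENNReal

variable {α : Type*} [MeasurableSpace α] {μ : Measure α}

lemma aemeas_rpow {f : α → ℝ≥0∞} (hf : AEMeasurable f μ) (p : ℝ) :
    AEMeasurable (fun x => f x ^ p) μ :=
  ENNReal.continuous_rpow_const.measurable.comp_aemeasurable hf

lemma enorm_sq (a : ℝ) : (‖a ^ 2‖₊ : ℝ≥0∞) = (‖a‖₊ : ℝ≥0∞) ^ (2:ℝ) := by
  rw [show ((2:ℝ)) = ((2:ℕ):ℝ) by norm_num, ENNReal.rpow_natCast]
  simp [nnnorm_pow]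

lemma lint_rpow_eq {f : α → ℝ} {p : ℝ} (hp : 0 < p) :
    ∫⁻ x, (‖f x‖₊ : ℝ≥0∞) ^ p ∂μ = eLpNorm f (ENNReal.ofReal p) μ ^ p := by
  rw [eLpNorm_eq_lintegral_rpow_enorm_toReal (by simpa using hp) ENNReal.ofReal_ne_top,
    ENNReal.toReal_ofReal hp.le, ← ENNReal.rpow_mul, one_div_mul_cancel hp.ne',
    ENNReal.rpow_one]
  rfl

/-- L¹ bound on `u² - v²` via L² bounds. -/
lemma l1_bound {u v : α → ℝ} {B : ℝ≥0∞}
    (hu : AEStronglyMeasurable u μ)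
    (h2u : eLpNorm u 2 μ ≤ B) (h2v : eLpNorm v 2 μ ≤ B) :
    ∫⁻ x, (‖u x ^ 2 - v x ^ 2‖₊ : ℝ≥0∞) ∂μ ≤ B ^ (2:ℝ) + B ^ (2:ℝ) := by
  have key : ∀ x, (‖u x ^ 2 - v x ^ 2‖₊ : ℝ≥0∞)
      ≤ (‖u x‖₊ : ℝ≥0∞) ^ (2:ℝ) + (‖v x‖₊ : ℝ≥0∞) ^ (2:ℝ) := by
    intro x
    rw [← enorm_sq, ← enorm_sq]
    exact_mod_cast ENNReal.coe_le_coe.2 (nnnorm_sub_le _ _)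
  calc ∫⁻ x, (‖u x ^ 2 - v x ^ 2‖₊ : ℝ≥0∞) ∂μ
      ≤ ∫⁻ x, ((‖u x‖₊ : ℝ≥0∞) ^ (2:ℝ) + (‖v x‖₊ : ℝ≥0∞) ^ (2:ℝ)) ∂μ :=
        lintegral_mono key
    _ = ∫⁻ x, (‖u x‖₊ : ℝ≥0∞) ^ (2:ℝ) ∂μ + ∫⁻ x, (‖v x‖₊ : ℝ≥0∞) ^ (2:ℝ) ∂μ :=
        lintegral_add_left' (aemeas_rpow hu.enorm 2) _
    _ ≤ B ^ (2:ℝ) + B ^ (2:ℝ) := by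
        have hu2 := lint_rpow_eq (f := u) (μ := μ) (by norm_num : (0:ℝ) < 2)
        have hv2 := lint_rpow_eq (f := v) (μ := μ) (by norm_num : (0:ℝ) < 2)
        rw [ENNReal.ofReal_ofNat] at hu2 hv2
        rw [hu2, hv2]
        exact add_le_add (ENNReal.rpow_le_rpow h2u (by norm_num))
          (ENNReal.rpow_le_rpow h2v (by norm_num))

/-- `L^{5/3}` bound on `u² - v²` via `L^{10/3}` bounds. -/
lemma l53_bound {u v : α → ℝ} {B : ℝ≥0∞}
    (hu : AEStronglyMeasurable u μ) (hv : AEStronglyMeasurable v μ)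
    (h2u : eLpNorm u (ENNReal.ofReal (10/3)) μ ≤ B)
    (h2v : eLpNorm v (ENNReal.ofReal (10/3)) μ ≤ B) :
    (∫⁻ x, (‖u x ^ 2 - v x ^ 2‖₊ : ℝ≥0∞) ^ (5/3 : ℝ) ∂μ) ^ (3/5 : ℝ)
      ≤ B ^ (2:ℝ) + B ^ (2:ℝ) := by
  have husq : AEStronglyMeasurable (fun x => u x ^ 2) μ := by
    exact hu.pow 2
  have hvsq : AEStronglyMeasurable (fun x => v x ^ 2) μ := by
    exact hv.pow 2
  have key : ∀ (f : α → ℝ), eLpNorm (fun x => f x ^ 2) (ENNReal.ofReal (5/3)) μ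
      = eLpNorm f (ENNReal.ofReal (10/3)) μ ^ (2:ℝ) := by
    intro f
    have : (fun x => f x ^ 2) = fun x => ‖f x‖ ^ (2:ℝ) := by
      funext x
      rw [Real.norm_eq_abs, show ((2:ℝ)) = ((2:ℕ):ℝ) by norm_num, Real.rpow_natCast, sq_abs]
    rw [this, eLpNorm_norm_rpow f (by norm_num : (0:ℝ) < 2)]
    congr 1
    rw [← ENNReal.ofReal_mul (by norm_num : (0:ℝ) ≤ 5/3)]
    norm_num
  have e53 : (∫⁻ x, (‖u x ^ 2 - v x ^ 2‖₊ : ℝ≥0∞) ^ (5/3 : ℝ) ∂μ) ^ (3/5 : ℝ)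
      = eLpNorm (fun x => u x ^ 2 - v x ^ 2) (ENNReal.ofReal (5/3)) μ := by
    rw [lint_rpow_eq (by norm_num : (0:ℝ) < 5/3), ← ENNReal.rpow_mul]
    norm_num
  rw [e53]
  calc eLpNorm (fun x => u x ^ 2 - v x ^ 2) (ENNReal.ofReal (5/3)) μ
      ≤ eLpNorm (fun x => u x ^ 2) (ENNReal.ofReal (5/3)) μ
        + eLpNorm (fun x => v x ^ 2) (ENNReal.ofReal (5/3)) μ :=
        eLpNorm_sub_le husq hvsq (by rw [← ENNReal.ofReal_one]; gcongr <;> norm_num)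
    _ ≤ B ^ (2:ℝ) + B ^ (2:ℝ) := by
        rw [key u, key v]
        exact add_le_add (ENNReal.rpow_le_rpow h2u (by norm_num))
          (ENNReal.rpow_le_rpow h2v (by norm_num))

/-- Cauchy-Schwarz on a set for `u² - v²`. -/
lemma cs_bound {u v : α → ℝ} {B : ℝ≥0∞} (s : Set α)
    (hu : AEStronglyMeasurable u μ) (hv : AEStronglyMeasurable v μ)
    (h2u : eLpNorm u 2 μ ≤ B) (h2v : eLpNorm v 2 μ ≤ B) :
    ∫⁻ x in s, (‖u x ^ 2 - v x ^ 2‖₊ : ℝ≥0∞) ∂μ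
      ≤ (∫⁻ x in s, (‖u x - v x‖₊ : ℝ≥0∞) ^ (2:ℝ) ∂μ) ^ (1/2 : ℝ) * (B + B) := by
  have hconj : Real.HolderConjugate 2 2 := ⟨by norm_num, by norm_num, by norm_num⟩
  have heq : ∀ x, (‖u x ^ 2 - v x ^ 2‖₊ : ℝ≥0∞)
      = ((fun y => (‖u y - v y‖₊ : ℝ≥0∞)) * fun y => (‖u y + v y‖₊ : ℝ≥0∞)) x := by
    intro x
    simp only [Pi.mul_apply, ← ENNReal.coe_mul, ← nnnorm_mul]
    congr 2
    ring
  calc ∫⁻ x in s, (‖u x ^ 2 - v x ^ 2‖₊ : ℝ≥0∞) ∂μ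
      = ∫⁻ x in s, ((fun y => (‖u y - v y‖₊ : ℝ≥0∞)) * fun y => (‖u y + v y‖₊ : ℝ≥0∞)) x ∂μ :=
        lintegral_congr heq
    _ ≤ (∫⁻ x in s, (‖u x - v x‖₊ : ℝ≥0∞) ^ (2:ℝ) ∂μ) ^ (1/2 : ℝ)
        * (∫⁻ x in s, (‖u x + v x‖₊ : ℝ≥0∞) ^ (2:ℝ) ∂μ) ^ (1/2 : ℝ) :=
        ENNReal.lintegral_mul_le_Lp_mul_Lq _ hconj
          ((hu.sub hv).enorm.restrict) ((hu.add hv).enorm.restrict)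
    _ ≤ (∫⁻ x in s, (‖u x - v x‖₊ : ℝ≥0∞) ^ (2:ℝ) ∂μ) ^ (1/2 : ℝ) * (B + B) := by
        gcongr
        have hle : ∫⁻ x in s, (‖u x + v x‖₊ : ℝ≥0∞) ^ (2:ℝ) ∂μ
            ≤ ∫⁻ x, (‖u x + v x‖₊ : ℝ≥0∞) ^ (2:ℝ) ∂μ := setLIntegral_le_lintegral _ _
        calc (∫⁻ x in s, (‖u x + v x‖₊ : ℝ≥0∞) ^ (2:ℝ) ∂μ) ^ (1/2 : ℝ)
            ≤ (∫⁻ x, (‖u x + v x‖₊ : ℝ≥0∞) ^ (2:ℝ) ∂μ) ^ (1/2 : ℝ) :=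
              ENNReal.rpow_le_rpow hle (by norm_num)
          _ = eLpNorm (fun x => u x + v x) (ENNReal.ofReal 2) μ := by
              rw [lint_rpow_eq (by norm_num : (0:ℝ) < 2), ← ENNReal.rpow_mul]
              norm_num
          _ ≤ B + B := by
              rw [ENNReal.ofReal_ofNat]
              exact le_trans (eLpNorm_add_le hu hv one_le_two) (add_le_add h2u h2v)

/-- conversion of the local L² integral. -/
lemma ofReal_loc {w : α → ℝ} (s : Set α) (hw : MemLp w 2 μ) :
    ∫⁻ x in s, (‖w x‖₊ : ℝ≥0∞) ^ (2:ℝ) ∂μ = ENNReal.ofReal (∫ x in s, |w x| ^ 2 ∂μ) := by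
  have hint : Integrable (fun x => |w x| ^ 2) (μ.restrict s) := by
    have := hw.integrable_sq.restrict (s := s)
    simpa [sq_abs] using this
  rw [ofReal_integral_eq_lintegral_ofReal hint
    (Eventually.of_forall fun x => by positivity)]
  apply lintegral_congr
  intro x
  rw [← enorm_eq_nnnorm, Real.enorm_eq_ofReal_abs, ← Real.rpow_natCast |w x| 2,
    ENNReal.ofReal_rpow_of_nonneg (abs_nonneg _) (by positivity)]
  norm_num

/-- Truncation: the `5/2`-mass above level `M` tends to `0`. -/
lemma trunc_tendsto {W : α → ℝ} (hW : Measurable W)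
    (hfin : ∫⁻ x, (‖W x‖₊ : ℝ≥0∞) ^ (5/2 : ℝ) ∂μ ≠ ⊤) :
    Tendsto (fun M : ℕ => ∫⁻ x,
        {y | (M:ℝ) < |W y|}.indicator (fun y => (‖W y‖₊ : ℝ≥0∞) ^ (5/2 : ℝ)) x ∂μ)
      atTop (nhds 0) := by
  have hmeasF : ∀ M : ℕ, Measurable
      ({y | (M:ℝ) < |W y|}.indicator (fun y => (‖W y‖₊ : ℝ≥0∞) ^ (5/2 : ℝ))) := by
    intro M
    exact Measurable.indicator
      (ENNReal.continuous_rpow_const.measurable.comp hW.nnnorm.coe_nnreal_ennreal)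
      (measurableSet_lt measurable_const hW.abs)
  have := tendsto_lintegral_of_dominated_convergence
    (F := fun M : ℕ => {y | (M:ℝ) < |W y|}.indicator (fun y => (‖W y‖₊ : ℝ≥0∞) ^ (5/2 : ℝ)))
    (f := fun _ => 0) (fun x => (‖W x‖₊ : ℝ≥0∞) ^ (5/2 : ℝ)) hmeasF
    (fun M => Eventually.of_forall fun x => Set.indicator_le_self _ _ x) hfin ?_
  · simpa only [lintegral_zero] using this
  · refine Eventually.of_forall fun x => ?_
    obtain ⟨N, hN⟩ := exists_nat_ge |W x|
    refine tendsto_const_nhds.congr' ?_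
    filter_upwards [eventually_ge_atTop N] with M hM
    rw [Set.indicator_of_notMem]
    simp only [Set.mem_setOf_eq, not_lt]
    exact hN.trans (by exact_mod_cast hM)

/-- Lemma 2.2 (Vlimit): if `V = V₁ + V₂` with `V₁ ∈ L^{5/2}`, `V₂ ∈ L^∞`, `V(x) → 0`
as `|x| → ∞`, and `(uₙ)`, `(vₙ)` are bounded in `L² ∩ L^{10/3}` with `uₙ − vₙ → 0`
in `L²_loc(ℝ³)`, then `∫ V(|uₙ|² − |vₙ|²) → 0`. -/
theorem stmt10 (V V1 V2 : EuclideanSpace ℝ (Fin 3) → ℝ)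
    (hV : V = V1 + V2)
    (hV1 : MemLp V1 (ENNReal.ofReal (5 / 2)) volume)
    (hV2 : MemLp V2 ⊤ volume)
    (hVlim : Tendsto V (cocompact (EuclideanSpace ℝ (Fin 3))) (nhds 0))
    (u v : ℕ → EuclideanSpace ℝ (Fin 3) → ℝ)
    (hmeas : ∀ n, AEStronglyMeasurable (u n) volume ∧ AEStronglyMeasurable (v n) volume)
    (hbdd : ∃ B : ENNReal, B ≠ ⊤ ∧ ∀ n,
        eLpNorm (u n) 2 volume ≤ B ∧ eLpNorm (u n) (ENNReal.ofReal (10 / 3)) volume ≤ B ∧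
        eLpNorm (v n) 2 volume ≤ B ∧ eLpNorm (v n) (ENNReal.ofReal (10 / 3)) volume ≤ B)
    (hloc : ∀ R > (0 : ℝ),
        Tendsto (fun n => ∫ x in Metric.ball (0 : EuclideanSpace ℝ (Fin 3)) R,
          |u n x - v n x| ^ 2) atTop (nhds 0))
    (hint : ∀ n, Integrable (fun x => V x * ((u n x) ^ 2 - (v n x) ^ 2))) :
    Tendsto (fun n => ∫ x, V x * ((u n x) ^ 2 - (v n x) ^ 2)) atTop (nhds 0) := by
  obtain ⟨B, hBtop, hB⟩ := hbdd
  rw [NormedAddCommGroup.tendsto_nhds_zero]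
  intro ε hε
  -- constants
  set Bt := B.toReal with hBt
  have hBt0 : 0 ≤ Bt := ENNReal.toReal_nonneg
  have hBor : B = ENNReal.ofReal Bt := (ENNReal.ofReal_toReal hBtop).symm
  set D : ℝ≥0∞ := B ^ (2:ℝ) + B ^ (2:ℝ) with hD
  have hDtop : D ≠ ⊤ :=
    ENNReal.add_ne_top.2 ⟨ENNReal.rpow_ne_top_of_nonneg (by norm_num) hBtop,
      ENNReal.rpow_ne_top_of_nonneg (by norm_num) hBtop⟩
  set Dr := D.toReal with hDr
  have hDr0 : 0 ≤ Dr := ENNReal.toReal_nonneg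
  have hDle : D ≤ ENNReal.ofReal (Dr + 1) := by
    rw [← ENNReal.ofReal_toReal hDtop]
    exact ENNReal.ofReal_le_ofReal (by linarith)
  -- δ and the radius R
  set δ := ε / (4 * (Dr + 1)) with hδ
  have hδpos : 0 < δ := by positivity
  obtain ⟨K, hK, hKsub⟩ := mem_cocompact.1 (hVlim (Metric.ball_mem_nhds (0:ℝ) hδpos))
  obtain ⟨R, hRpos, hKR⟩ := hK.isBounded.subset_ball_lt 0 0
  set S := Metric.ball (0 : EuclideanSpace ℝ (Fin 3)) R with hSdef
  have hSm : MeasurableSet S := measurableSet_ball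
  have hVsmall : ∀ x, x ∉ S → |V x| ≤ δ := by
    intro x hx
    have hxK : x ∈ Kᶜ := fun hxK => hx (hKR hxK)
    have h2 : dist (V x) 0 < δ := hKsub hxK
    rw [Real.dist_eq, sub_zero] at h2
    exact h2.le
  -- V2 essential bound
  set C := (eLpNormEssSup V2 volume).toReal with hC
  have hC0 : 0 ≤ C := ENNReal.toReal_nonneg
  have hCesstop : eLpNormEssSup V2 volume ≠ ⊤ := by
    have h2 := hV2.2
    rw [eLpNorm_exponent_top] at h2
    exact h2.ne
  have hV2ae : ∀ᵐ x ∂(volume : Measure (EuclideanSpace ℝ (Fin 3))), |V2 x| ≤ C := by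
    filter_upwards [ae_le_eLpNormEssSup (f := V2) (μ := volume)] with x hx
    have h1 : ENNReal.ofReal |V2 x| ≤ ENNReal.ofReal C := by
      rw [← Real.enorm_eq_ofReal_abs, hC, ENNReal.ofReal_toReal hCesstop]
      exact_mod_cast hx
    exact (ENNReal.ofReal_le_ofReal_iff hC0).1 h1
  -- measurable representative of V1
  set W := hV1.1.mk V1 with hWdef
  have hWmeas : Measurable W := hV1.1.stronglyMeasurable_mk.measurable
  have hWae : V1 =ᵐ[volume] W := hV1.1.ae_eq_mk
  -- truncation level M
  have hfin52 : ∫⁻ x, (‖W x‖₊ : ℝ≥0∞) ^ (5/2:ℝ) ∂volume ≠ ⊤ := by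
    rw [lint_rpow_eq (by norm_num : (0:ℝ) < 5/2), eLpNorm_congr_ae hWae.symm]
    exact ENNReal.rpow_ne_top_of_nonneg (by norm_num) hV1.2.ne
  have hτpos : (0:ℝ≥0∞) < ENNReal.ofReal δ ^ (5/2:ℝ) :=
    ENNReal.rpow_pos (ENNReal.ofReal_pos.2 hδpos) ENNReal.ofReal_ne_top
  obtain ⟨M, hM⟩ := ((trunc_tendsto hWmeas hfin52).eventually (gt_mem_nhds hτpos)).exists
  set Sp := {y | (M:ℝ) < |W y|} with hSpdef
  have hSpm : MeasurableSet Sp := measurableSet_lt measurable_const hWmeas.abs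
  -- the eventual smallness of the local integral
  set a := ε / (4 * (C + M + 1) * (2*Bt + 1)) with ha
  have haux : (0:ℝ) < C + M + 1 := by positivity
  have hapos : 0 < a := by positivity
  have hev : ∀ᶠ n in atTop, ∫ x in S, |u n x - v n x| ^ 2 ∂volume < a^2 :=
    (hloc R hRpos).eventually (gt_mem_nhds (by positivity))
  filter_upwards [hev] with n hn
  -- per-n objects
  obtain ⟨h2u, h103u, h2v, h103v⟩ := hB n
  have hum := (hmeas n).1
  have hvm := (hmeas n).2
  set g := fun x => u n x ^ 2 - v n x ^ 2 with hgdef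
  have husq : AEStronglyMeasurable (fun x => u n x ^ 2) volume := by
    exact hum.pow 2
  have hvsq : AEStronglyMeasurable (fun x => v n x ^ 2) volume := by
    exact hvm.pow 2
  have hgm : AEStronglyMeasurable g volume := husq.sub hvsq
  have hgena : AEMeasurable (fun x => (‖g x‖₊ : ℝ≥0∞)) volume := hgm.enorm
  -- master pointwise bound
  have master : ∀ᵐ x ∂(volume : Measure (EuclideanSpace ℝ (Fin 3))),
      (‖V x * g x‖₊ : ℝ≥0∞) ≤
        ENNReal.ofReal δ * (‖g x‖₊ : ℝ≥0∞)
        + ENNReal.ofReal (C + M) * S.indicator (fun y => (‖g y‖₊ : ℝ≥0∞)) x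
        + Sp.indicator (fun y => (‖W y‖₊ : ℝ≥0∞)) x * (‖g x‖₊ : ℝ≥0∞) := by
    filter_upwards [hWae, hV2ae] with x hx1 hx2
    have hVx : V x = V1 x + V2 x := by rw [hV]; rfl
    have hmul : (‖V x * g x‖₊ : ℝ≥0∞) = ENNReal.ofReal |V x| * (‖g x‖₊ : ℝ≥0∞) := by
      rw [nnnorm_mul, ENNReal.coe_mul, ← enorm_eq_nnnorm, Real.enorm_eq_ofReal_abs]
    by_cases hxS : x ∈ S
    · by_cases hxM : (M:ℝ) < |W x|
      · -- peak region
        have hco : ENNReal.ofReal |V x| ≤ (‖W x‖₊ : ℝ≥0∞) + ENNReal.ofReal (C + M) := by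
          rw [← enorm_eq_nnnorm, Real.enorm_eq_ofReal_abs, ← ENNReal.ofReal_add (abs_nonneg _) (by positivity)]
          apply ENNReal.ofReal_le_ofReal
          rw [hVx]
          calc |V1 x + V2 x| ≤ |V1 x| + |V2 x| := abs_add_le _ _
            _ ≤ |W x| + (C + M) := by rw [hx1]; have := Nat.cast_nonneg (α := ℝ) M; linarith
        calc (‖V x * g x‖₊ : ℝ≥0∞)
            ≤ ((‖W x‖₊ : ℝ≥0∞) + ENNReal.ofReal (C + M)) * (‖g x‖₊ : ℝ≥0∞) := by
              rw [hmul]; exact mul_le_mul_left hco _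
          _ = Sp.indicator (fun y => (‖W y‖₊ : ℝ≥0∞)) x * (‖g x‖₊ : ℝ≥0∞)
              + ENNReal.ofReal (C + M) * S.indicator (fun y => (‖g y‖₊ : ℝ≥0∞)) x := by
              rw [Set.indicator_of_mem (show x ∈ Sp from hxM),
                Set.indicator_of_mem hxS, add_mul]
          _ = ENNReal.ofReal (C + M) * S.indicator (fun y => (‖g y‖₊ : ℝ≥0∞)) x
              + Sp.indicator (fun y => (‖W y‖₊ : ℝ≥0∞)) x * (‖g x‖₊ : ℝ≥0∞) := add_comm _ _
          _ ≤ _ := by rw [add_assoc]; exact le_add_self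
      · -- bounded region
        have hco : ENNReal.ofReal |V x| ≤ ENNReal.ofReal (C + M) := by
          apply ENNReal.ofReal_le_ofReal
          rw [hVx]
          calc |V1 x + V2 x| ≤ |V1 x| + |V2 x| := abs_add_le _ _
            _ ≤ C + M := by rw [hx1]; push_neg at hxM; linarith
        calc (‖V x * g x‖₊ : ℝ≥0∞)
            ≤ ENNReal.ofReal (C + M) * S.indicator (fun y => (‖g y‖₊ : ℝ≥0∞)) x := by
              rw [hmul, Set.indicator_of_mem hxS]; exact mul_le_mul_left hco _
          _ ≤ _ := le_add_self.trans (self_le_add_right _ _)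
    · -- far region
      have hco : ENNReal.ofReal |V x| ≤ ENNReal.ofReal δ :=
        ENNReal.ofReal_le_ofReal (hVsmall x hxS)
      calc (‖V x * g x‖₊ : ℝ≥0∞)
          ≤ ENNReal.ofReal δ * (‖g x‖₊ : ℝ≥0∞) := by
            rw [hmul]; exact mul_le_mul_left hco _
        _ ≤ _ := (self_le_add_right _ _).trans (self_le_add_right _ _)
  -- piece 1
  have hδD : ENNReal.ofReal δ * D ≤ ENNReal.ofReal (ε/4) := by
    calc ENNReal.ofReal δ * D ≤ ENNReal.ofReal δ * ENNReal.ofReal (Dr + 1) :=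
          mul_le_mul_right hDle _
      _ = ENNReal.ofReal (δ * (Dr + 1)) := (ENNReal.ofReal_mul hδpos.le).symm
      _ ≤ ENNReal.ofReal (ε/4) := by
          apply ENNReal.ofReal_le_ofReal
          rw [hδ, div_mul_eq_mul_div, mul_comm 4 (Dr+1), ← div_div,
            mul_div_assoc, div_self (by linarith : Dr + 1 ≠ 0), mul_one]
  have hT1 : ENNReal.ofReal δ * ∫⁻ x, (‖g x‖₊ : ℝ≥0∞) ∂volume ≤ ENNReal.ofReal (ε/4) :=
    le_trans (mul_le_mul_right (l1_bound hum h2u h2v) _) hδD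
  -- piece 3
  have hT3 : ∫⁻ x, Sp.indicator (fun y => (‖W y‖₊:ℝ≥0∞)) x * (‖g x‖₊:ℝ≥0∞) ∂volume
      ≤ ENNReal.ofReal (ε/4) := by
    have hconj : Real.HolderConjugate (5/2) (5/3) := ⟨by norm_num, by norm_num, by norm_num⟩
    have hmeasSp : AEMeasurable (Sp.indicator fun y => (‖W y‖₊:ℝ≥0∞)) volume :=
      ((hWmeas.nnnorm.coe_nnreal_ennreal).indicator hSpm).aemeasurable
    have hind : (fun x => (Sp.indicator (fun y => (‖W y‖₊:ℝ≥0∞)) x) ^ (5/2:ℝ))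
        = Sp.indicator (fun y => (‖W y‖₊:ℝ≥0∞) ^ (5/2:ℝ)) := by
      funext x
      by_cases hx : x ∈ Sp
      · rw [Set.indicator_of_mem hx, Set.indicator_of_mem hx]
      · rw [Set.indicator_of_notMem hx, Set.indicator_of_notMem hx,
          ENNReal.zero_rpow_of_pos (by norm_num)]
    calc ∫⁻ x, Sp.indicator (fun y => (‖W y‖₊:ℝ≥0∞)) x * (‖g x‖₊:ℝ≥0∞) ∂volume
        = ∫⁻ x, ((Sp.indicator fun y => (‖W y‖₊:ℝ≥0∞)) * fun x => (‖g x‖₊:ℝ≥0∞)) x ∂volume :=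
          rfl
      _ ≤ (∫⁻ x, (Sp.indicator (fun y => (‖W y‖₊:ℝ≥0∞)) x) ^ (5/2:ℝ) ∂volume) ^ (1/(5/2):ℝ)
          * (∫⁻ x, (‖g x‖₊:ℝ≥0∞) ^ (5/3:ℝ) ∂volume) ^ (1/(5/3):ℝ) :=
          ENNReal.lintegral_mul_le_Lp_mul_Lq volume hconj hmeasSp hgena
      _ ≤ ENNReal.ofReal δ * D := by
          apply mul_le_mul'
          · rw [hind]
            calc (∫⁻ x, Sp.indicator (fun y => (‖W y‖₊:ℝ≥0∞) ^ (5/2:ℝ)) x ∂volume) ^ (1/(5/2):ℝ)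
                ≤ (ENNReal.ofReal δ ^ (5/2:ℝ)) ^ (1/(5/2):ℝ) :=
                  ENNReal.rpow_le_rpow hM.le (by norm_num)
              _ = ENNReal.ofReal δ := by
                  rw [← ENNReal.rpow_mul]; norm_num
          · rw [show (1/(5/3):ℝ) = 3/5 by norm_num]
            exact l53_bound hum hvm h103u h103v
      _ ≤ ENNReal.ofReal (ε/4) := hδD
  -- piece 2
  have hmemu : MemLp (u n) 2 volume := ⟨hum, h2u.trans_lt hBtop.lt_top⟩
  have hmemv : MemLp (v n) 2 volume := ⟨hvm, h2v.trans_lt hBtop.lt_top⟩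
  have hmem2 : MemLp (fun x => u n x - v n x) 2 volume := hmemu.sub hmemv
  have hT2 : ENNReal.ofReal (C+M) * ∫⁻ x in S, (‖g x‖₊:ℝ≥0∞) ∂volume
      ≤ ENNReal.ofReal (ε/4) := by
    have hcs := cs_bound (μ := volume) (B := B) S hum hvm h2u h2v
    have hloc2 : ∫⁻ x in S, (‖u n x - v n x‖₊:ℝ≥0∞) ^ (2:ℝ) ∂volume
        = ENNReal.ofReal (∫ x in S, |u n x - v n x| ^ 2 ∂volume) := ofReal_loc S hmem2
    have hsq : ENNReal.ofReal (a^2) = ENNReal.ofReal a ^ (2:ℝ) := by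
      rw [← Real.rpow_natCast a 2, ENNReal.ofReal_rpow_of_nonneg hapos.le (by positivity)]
      norm_num
    have hfac : (∫⁻ x in S, (‖u n x - v n x‖₊:ℝ≥0∞) ^ (2:ℝ) ∂volume) ^ (1/2:ℝ)
        ≤ ENNReal.ofReal a := by
      rw [hloc2]
      calc (ENNReal.ofReal (∫ x in S, |u n x - v n x| ^ 2 ∂volume)) ^ (1/2:ℝ)
          ≤ (ENNReal.ofReal (a^2)) ^ (1/2:ℝ) :=
            ENNReal.rpow_le_rpow (ENNReal.ofReal_le_ofReal hn.le) (by norm_num)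
        _ = ENNReal.ofReal a := by rw [hsq, ← ENNReal.rpow_mul]; norm_num
    have hBB : B + B ≤ ENNReal.ofReal (2*Bt + 1) := by
      rw [hBor, ← ENNReal.ofReal_add hBt0 hBt0]
      exact ENNReal.ofReal_le_ofReal (by linarith)
    have hreal : (C+(M:ℝ)) * (a * (2*Bt+1)) ≤ ε/4 := by
      have h1 : a * (2*Bt+1) = ε / (4*(C+(M:ℝ)+1)) := by
        rw [ha]; field_simp
      rw [h1, mul_div_assoc']
      rw [div_le_div_iff₀ (by positivity) (by norm_num : (0:ℝ) < 4)]
      nlinarith [hε.le, hC0, (Nat.cast_nonneg M : (0:ℝ) ≤ (M:ℝ))]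
    calc ENNReal.ofReal (C+M) * ∫⁻ x in S, (‖g x‖₊:ℝ≥0∞) ∂volume
        ≤ ENNReal.ofReal (C+M)
          * ((∫⁻ x in S, (‖u n x - v n x‖₊:ℝ≥0∞) ^ (2:ℝ) ∂volume) ^ (1/2:ℝ) * (B + B)) :=
          mul_le_mul_right hcs _
      _ ≤ ENNReal.ofReal (C+M) * (ENNReal.ofReal a * ENNReal.ofReal (2*Bt+1)) :=
          mul_le_mul_right (mul_le_mul' hfac hBB) _
      _ = ENNReal.ofReal ((C+M) * (a * (2*Bt+1))) := by
          rw [← ENNReal.ofReal_mul hapos.le, ← ENNReal.ofReal_mul (by positivity)]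
      _ ≤ ENNReal.ofReal (ε/4) := ENNReal.ofReal_le_ofReal hreal
  -- assembling
  have hsplit : ∫⁻ x, (‖V x * g x‖₊:ℝ≥0∞) ∂volume ≤
      ENNReal.ofReal δ * ∫⁻ x, (‖g x‖₊:ℝ≥0∞) ∂volume
      + ENNReal.ofReal (C+M) * ∫⁻ x in S, (‖g x‖₊:ℝ≥0∞) ∂volume
      + ∫⁻ x, Sp.indicator (fun y => (‖W y‖₊:ℝ≥0∞)) x * (‖g x‖₊:ℝ≥0∞) ∂volume := by
    have hm1 : AEMeasurable (fun x => ENNReal.ofReal δ * (‖g x‖₊:ℝ≥0∞)) volume :=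
      hgena.const_mul _
    have hm2 : AEMeasurable
        (fun x => ENNReal.ofReal (C+M) * S.indicator (fun y => (‖g y‖₊:ℝ≥0∞)) x) volume :=
      (hgena.indicator hSm).const_mul _
    calc ∫⁻ x, (‖V x * g x‖₊:ℝ≥0∞) ∂volume
        ≤ ∫⁻ x, (ENNReal.ofReal δ * (‖g x‖₊:ℝ≥0∞)
            + ENNReal.ofReal (C+M) * S.indicator (fun y => (‖g y‖₊:ℝ≥0∞)) x
            + Sp.indicator (fun y => (‖W y‖₊:ℝ≥0∞)) x * (‖g x‖₊:ℝ≥0∞)) ∂volume :=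
          lintegral_mono_ae master
      _ = ∫⁻ x, (ENNReal.ofReal δ * (‖g x‖₊:ℝ≥0∞)
            + ENNReal.ofReal (C+M) * S.indicator (fun y => (‖g y‖₊:ℝ≥0∞)) x) ∂volume
          + ∫⁻ x, Sp.indicator (fun y => (‖W y‖₊:ℝ≥0∞)) x * (‖g x‖₊:ℝ≥0∞) ∂volume :=
          lintegral_add_left' (hm1.add hm2) _
      _ = ∫⁻ x, ENNReal.ofReal δ * (‖g x‖₊:ℝ≥0∞) ∂volume
          + ∫⁻ x, ENNReal.ofReal (C+M) * S.indicator (fun y => (‖g y‖₊:ℝ≥0∞)) x ∂volume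
          + ∫⁻ x, Sp.indicator (fun y => (‖W y‖₊:ℝ≥0∞)) x * (‖g x‖₊:ℝ≥0∞) ∂volume := by
          rw [lintegral_add_left' hm1]
      _ = ENNReal.ofReal δ * ∫⁻ x, (‖g x‖₊:ℝ≥0∞) ∂volume
          + ENNReal.ofReal (C+M) * ∫⁻ x in S, (‖g x‖₊:ℝ≥0∞) ∂volume
          + ∫⁻ x, Sp.indicator (fun y => (‖W y‖₊:ℝ≥0∞)) x * (‖g x‖₊:ℝ≥0∞) ∂volume := by
          rw [lintegral_const_mul' _ _ ENNReal.ofReal_ne_top,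
            lintegral_const_mul' _ _ ENNReal.ofReal_ne_top, lintegral_indicator hSm]
  calc ‖∫ x, V x * (u n x ^ 2 - v n x ^ 2)‖
      ≤ (∫⁻ x, ENNReal.ofReal ‖V x * g x‖ ∂volume).toReal :=
        norm_integral_le_lintegral_norm _
    _ = (∫⁻ x, (‖V x * g x‖₊:ℝ≥0∞) ∂volume).toReal := by
        simp_rw [ofReal_norm_eq_enorm]; rfl
    _ ≤ (ENNReal.ofReal (ε/4) + ENNReal.ofReal (ε/4) + ENNReal.ofReal (ε/4)).toReal := by
        apply ENNReal.toReal_mono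
        · exact ENNReal.add_ne_top.2 ⟨ENNReal.add_ne_top.2
            ⟨ENNReal.ofReal_ne_top, ENNReal.ofReal_ne_top⟩, ENNReal.ofReal_ne_top⟩
        · exact hsplit.trans (add_le_add (add_le_add hT1 hT2) hT3)
    _ < ε := by
        rw [← ENNReal.ofReal_add (by positivity) (by positivity),
          ← ENNReal.ofReal_add (by positivity) (by positivity),
          ENNReal.toReal_ofReal (by positivity)]
        linarith
end
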